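/- Let p be a monic complex polynomial of degree n ≥ 4 whose roots are 0, 1, z₃, ..., zₙ, all simple, with 0 in the interior of the convex hull of the other roots, and assume no ray from 0 contains two distinct roots of p. Then there exist two angularly adjacent roots zᵢ, zⱼ (adjacent in cyclic order of arguments around 0) such that the open sector at 0 bounded by the rays through zᵢ and zⱼ contains no root of p'. -/

import Mathlib

open Polynomial Real Finset

/-- The argument of a nonzero complex number, normalized to lie in `[0, 2π)`. -/
noncomputable def arg2pi (z : ℂ) : ℝ := if 0 ≤ z.arg then z.arg else z.arg + 2 * π

/-- The open angular sector at the origin spanned by the directions of `u` and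
`v` (valid as the sector between the two rays when the angle is less than π). -/
def openSector0 (u v : ℂ) : Set ℂ :=
  {w | ∃ s t : ℝ, 0 < s ∧ 0 < t ∧ w = s • u + t • v}

namespace SectorAux
open Complex

/-- 2D cross product. -/
def cross (u w : ℂ) : ℝ := u.re * w.im - u.im * w.re

lemma cross_self (u : ℂ) : cross u u = 0 := by simp [cross, mul_comm]

lemma ne_zero_of_cross_pos_right {u w : ℂ} (h : 0 < cross u w) : w ≠ 0 := by
  rintro rfl; simp [cross] at h

lemma mem_sector_iff {u v : ℂ} (h : 0 < cross u v) (w : ℂ) :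
    w ∈ openSector0 u v ↔ 0 < cross u w ∧ 0 < cross w v := by
  constructor
  · rintro ⟨s, t, hs, ht, rfl⟩
    constructor
    · have : cross u (s • u + t • v) = t * cross u v := by
        simp only [cross, Complex.add_im, Complex.add_re, Complex.smul_im, Complex.smul_re,
          smul_eq_mul]
        ring
      rw [this]; positivity
    · have : cross (s • u + t • v) v = s * cross u v := by
        simp only [cross, Complex.add_im, Complex.add_re, Complex.smul_im, Complex.smul_re,
          smul_eq_mul]
        ring
      rw [this]; positivity
  · rintro ⟨h1, h2⟩
    refine ⟨cross w v / cross u v, cross u w / cross u v, by positivity, by positivity, ?_⟩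
    have hD : cross u v ≠ 0 := ne_of_gt h
    simp only [cross] at hD
    apply Complex.ext
    · simp only [Complex.add_re, Complex.smul_re, smul_eq_mul, cross]
      rw [div_mul_eq_mul_div, div_mul_eq_mul_div, ← add_div, eq_div_iff hD]
      ring
    · simp only [Complex.add_im, Complex.smul_im, smul_eq_mul, cross]
      rw [div_mul_eq_mul_div, div_mul_eq_mul_div, ← add_div, eq_div_iff hD]
      ring

lemma arg2pi_nonneg (z : ℂ) : 0 ≤ arg2pi z := by
  unfold arg2pi; split
  · assumption
  · have := Complex.neg_pi_lt_arg z
    have := Real.pi_pos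
    linarith

lemma arg2pi_lt (z : ℂ) : arg2pi z < 2 * π := by
  unfold arg2pi; split
  · have := Complex.arg_le_pi z
    have := Real.pi_pos
    linarith
  · have h : ¬ (0 ≤ z.arg) := by assumption
    push_neg at h
    have := Real.pi_pos
    linarith

lemma arg2pi_coe (z : ℂ) : ((arg2pi z : ℝ) : Real.Angle) = (Complex.arg z : Real.Angle) := by
  unfold arg2pi; split
  · rfl
  · rw [Real.Angle.coe_add]
    simp [Real.Angle.coe_two_pi]

lemma arg2pi_eq_zero {z : ℂ} (h : arg2pi z = 0) : Complex.arg z = 0 := by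
  unfold arg2pi at h
  split at h
  · exact h
  · exfalso
    have := Complex.neg_pi_lt_arg z
    have h2 : ¬ (0 ≤ z.arg) := by assumption
    push_neg at h2
    have := Real.pi_pos
    linarith

lemma im_pos_iff_arg {x : ℂ} : 0 < x.im ↔ 0 < Complex.arg x ∧ Complex.arg x < π := by
  constructor
  · intro h
    have h1 : 0 ≤ Complex.arg x := Complex.arg_nonneg_iff.2 h.le
    have h2 : Complex.arg x ≠ 0 := by
      intro h0
      rcases Complex.arg_eq_zero_iff.1 h0 with ⟨_, him⟩
      rw [him] at h; exact lt_irrefl 0 h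
    have h3 : Complex.arg x ≠ π := by
      intro h0
      rcases Complex.arg_eq_pi_iff.1 h0 with ⟨_, him⟩
      rw [him] at h; exact lt_irrefl 0 h
    exact ⟨lt_of_le_of_ne h1 (Ne.symm h2), lt_of_le_of_ne (Complex.arg_le_pi x) h3⟩
  · rintro ⟨h1, h2⟩
    have h0 : 0 ≤ x.im := Complex.arg_nonneg_iff.1 h1.le
    rcases lt_or_eq_of_le h0 with h | h
    · exact h
    · exfalso
      rcases le_or_gt 0 x.re with hre | hre
      · have : Complex.arg x = 0 := Complex.arg_eq_zero_iff.2 ⟨hre, h.symm⟩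
        linarith
      · have : Complex.arg x = π := Complex.arg_eq_pi_iff.2 ⟨hre, h.symm⟩
        linarith

lemma cross_iff_im_div {a b : ℂ} (ha : a ≠ 0) : 0 < cross a b ↔ 0 < (b / a).im := by
  rw [Complex.div_im]
  have hn : 0 < Complex.normSq a := Complex.normSq_pos.2 ha
  constructor
  · intro h
    have : 0 < (a.re * b.im - a.im * b.re) / Complex.normSq a := div_pos h hn
    calc (0:ℝ) < (a.re * b.im - a.im * b.re) / Complex.normSq a := this
      _ = b.im * a.re / Complex.normSq a - b.re * a.im / Complex.normSq a := by ring
  · intro h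
    have h2 : 0 < (a.re * b.im - a.im * b.re) / Complex.normSq a := by
      calc (0:ℝ) < b.im * a.re / Complex.normSq a - b.re * a.im / Complex.normSq a := h
        _ = (a.re * b.im - a.im * b.re) / Complex.normSq a := by ring
    have := mul_pos h2 hn
    rwa [div_mul_cancel₀] at this
    exact ne_of_gt hn

lemma arg_eq_arg2pi_of_lt_pi {q : ℂ} (h1 : arg2pi q < π) : Complex.arg q = arg2pi q := by
  unfold arg2pi at *
  split at h1
  · rw [if_pos (by assumption)]
  · exfalso
    have := Complex.neg_pi_lt_arg q
    linarith

lemma cross_pos_iff {a : ℂ} (ha : a ≠ 0) (b : ℂ) :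
    0 < cross a b ↔ 0 < arg2pi (b / a) ∧ arg2pi (b / a) < π := by
  rw [cross_iff_im_div ha, im_pos_iff_arg]
  constructor
  · rintro ⟨h1, h2⟩
    have he : arg2pi (b / a) = Complex.arg (b / a) := if_pos h1.le
    rw [he]; exact ⟨h1, h2⟩
  · rintro ⟨h1, h2⟩
    have he := arg_eq_arg2pi_of_lt_pi h2
    rw [he]; exact ⟨h1, h2⟩

lemma angle_sub_int {a b : ℝ} (h : (a : Real.Angle) = (b : Real.Angle)) :
    ∃ k : ℤ, a - b = 2 * π * k := Real.Angle.angle_eq_iff_two_pi_dvd_sub.1 h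

lemma int_pin {k : ℤ} {x : ℝ} (hx : x - 0 = 2 * π * k) (h1 : 0 < x) (h2 : x < 4 * π) :
    x = 2 * π := by
  rw [sub_zero] at hx
  have hπ := Real.pi_pos
  have hk0 : (0:ℝ) < (k:ℝ) := by nlinarith
  have hk2 : (k:ℝ) < 2 := by nlinarith
  have h3 : (0:ℤ) < k := by exact_mod_cast hk0
  have h4 : k < 2 := by exact_mod_cast hk2
  have hk : k = 1 := by omega
  rw [hx, hk]; push_cast; ring

lemma int_pin_zero {k : ℤ} {x : ℝ} (hx : x = 2 * π * k) (h1 : -(2*π) < x) (h2 : x < 2 * π) :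
    x = 0 := by
  have hπ := Real.pi_pos
  have hk0 : (-1:ℝ) < (k:ℝ) := by nlinarith
  have hk2 : (k:ℝ) < 1 := by nlinarith
  have h3 : (-1:ℤ) < k := by exact_mod_cast hk0
  have h4 : k < 1 := by exact_mod_cast hk2
  have hk : k = 0 := by omega
  rw [hx, hk]; push_cast; ring

lemma int_pin_cases {k : ℤ} {x : ℝ} (hx : x = 2 * π * k) (h1 : -(4*π) < x) (h2 : x < 2 * π) :
    x = 0 ∨ x = -(2*π) := by
  have hπ := Real.pi_pos
  have hk0 : (-2:ℝ) < (k:ℝ) := by nlinarith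
  have hk2 : (k:ℝ) < 1 := by nlinarith
  have h3 : (-2:ℤ) < k := by exact_mod_cast hk0
  have h4 : k < 1 := by exact_mod_cast hk2
  have hk : k = 0 ∨ k = -1 := by omega
  rcases hk with hk | hk
  · left; rw [hx, hk]; push_cast; ring
  · right; rw [hx, hk]; push_cast; ring

lemma arg_prod_coe_angle {ι : Type*} (s : Finset ι) (f : ι → ℂ) (h : ∀ i ∈ s, f i ≠ 0) :
    ((Complex.arg (∏ i ∈ s, f i) : ℝ) : Real.Angle)
      = ∑ i ∈ s, ((Complex.arg (f i) : ℝ) : Real.Angle) := by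
  classical
  induction s using Finset.cons_induction with
  | empty => simp [Complex.arg_one]
  | cons a s ha ih =>
    rw [Finset.prod_cons, Finset.sum_cons]
    rw [Complex.arg_mul_coe_angle (h a (Finset.mem_cons_self a s))
      (Finset.prod_ne_zero_iff.2 fun i hi => h i (Finset.mem_cons_of_mem hi))]
    rw [ih fun i hi => h i (Finset.mem_cons_of_mem hi)]

lemma notin_interior_halfplane (u : ℂ) (hu : u ≠ 0) {S : Set ℂ}
    (hS : ∀ w ∈ S, cross u w ≤ 0) : (0 : ℂ) ∉ interior (convexHull ℝ S) := by
  intro h0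
  set f : ℂ → ℝ := fun w => u.re * w.im - u.im * w.re with hf
  have hlin : IsLinearMap ℝ f := by
    constructor
    · intro x y; simp [hf, Complex.add_im, Complex.add_re]; ring
    · intro c x; simp [hf, Complex.smul_im, Complex.smul_re, smul_eq_mul]; ring
  have hconv : Convex ℝ {w : ℂ | f w ≤ 0} := convex_halfSpace_le hlin 0
  have hsub : convexHull ℝ S ⊆ {w : ℂ | f w ≤ 0} := convexHull_min hS hconv
  have h0' : (0 : ℂ) ∈ interior {w : ℂ | f w ≤ 0} := interior_mono hsub h0
  rw [mem_interior_iff_mem_nhds, Metric.mem_nhds_iff] at h0'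
  obtain ⟨ε, hε, hball⟩ := h0'
  set w₀ : ℂ := (ε / (2 * ‖u‖)) • (Complex.I * u) with hw0
  have habs : 0 < ‖u‖ := norm_pos_iff.mpr hu
  have hmem : w₀ ∈ Metric.ball (0:ℂ) ε := by
    simp only [Metric.mem_ball, dist_zero_right, hw0, norm_smul]
    rw [Real.norm_eq_abs, abs_of_pos (by positivity)]
    have : ‖Complex.I * u‖ = ‖u‖ := by
      rw [norm_mul]
      simp
    rw [this]
    rw [div_mul_eq_mul_div, mul_comm]
    rw [div_lt_iff₀ (by positivity)]
    nlinarith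
  have := hball hmem
  simp only [Set.mem_setOf_eq, hf] at this
  have h1 : w₀.im = (ε / (2 * ‖u‖)) * u.re := by
    rw [hw0, Complex.smul_im]
    rw [Complex.mul_im]
    simp
  have h2 : w₀.re = -((ε / (2 * ‖u‖)) * u.im) := by
    rw [hw0, Complex.smul_re]
    rw [Complex.mul_re]
    simp
  rw [h1, h2] at this
  have hresq : 0 < u.re ^ 2 + u.im ^ 2 := by
    have h : u.re ≠ 0 ∨ u.im ≠ 0 := by
      by_contra hcon
      push_neg at hcon
      exact hu (Complex.ext hcon.1 hcon.2)
    rcases h with h | h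
    · positivity
    · positivity
  nlinarith [div_pos hε (by positivity : (0:ℝ) < 2 * ‖u‖)]

lemma prod_crit {m : ℕ} (z ζ : Fin m → ℂ) (hζinj : Function.Injective ζ)
    (hroot : ∀ i, eval (ζ i) (derivative (X * ∏ j, (X - C (z j)))) = 0) :
    ((m : ℂ) + 1) * ∏ i, ζ i = ∏ i, z i := by
  classical
  set P : ℂ[X] := ∏ j, (X - C (z j)) with hP
  have hPmonic : P.Monic := monic_prod_of_monic _ _ fun i _ => monic_X_sub_C _
  have hPdeg : P.natDegree = m := by
    rw [hP, natDegree_prod_of_monic _ _ fun i _ => monic_X_sub_C _]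
    simp [natDegree_X_sub_C]
  have hpmonic : (X * P).Monic := monic_X.mul hPmonic
  have hpdeg : (X * P).natDegree = m + 1 := by
    rw [natDegree_mul X_ne_zero hPmonic.ne_zero, natDegree_X, hPdeg]
    omega
  set D : ℂ[X] := derivative (X * P) with hD
  have hcoeffD : D.coeff m = (m : ℂ) + 1 := by
    rw [hD, coeff_derivative]
    have : (X * P).coeff (m + 1) = 1 := by
      have := hpmonic.coeff_natDegree
      rwa [hpdeg] at this
    rw [this, one_mul]
    try push_cast
    try ring
  have hm1 : ((m : ℂ) + 1) ≠ 0 := by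
    have : ((m : ℂ) + 1) = ((m + 1 : ℕ) : ℂ) := by push_cast; ring
    rw [this]
    exact_mod_cast Nat.succ_ne_zero m
  have hD0 : D ≠ 0 := fun h => hm1 (by rw [← hcoeffD, h, coeff_zero])
  have hDdeg_le : D.natDegree ≤ m := by
    have h := natDegree_derivative_le (X * P)
    rw [hpdeg] at h
    exact h.trans (by omega)
  set M : Multiset ℂ := Finset.univ.val.map ζ with hM
  have hMnodup : M.Nodup := Multiset.Nodup.map hζinj Finset.univ.nodup
  have hMle : M ≤ D.roots := by
    rw [Multiset.le_iff_subset hMnodup]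
    intro a ha
    rw [hM, Multiset.mem_map] at ha
    obtain ⟨i, _, rfl⟩ := ha
    exact (mem_roots hD0).2 (hroot i)
  have hMcard : Multiset.card M = m := by
    rw [hM, Multiset.card_map]
    simp
  have hrootscard_le : Multiset.card D.roots ≤ m := (card_roots' D).trans hDdeg_le
  have hMeq : M = D.roots := Multiset.eq_of_le_of_card_le hMle (by omega)
  have hrootscard : Multiset.card D.roots = D.natDegree := by
    have h1 : m ≤ D.natDegree := by
      rw [← hMcard, hMeq]
      exact card_roots' D
    have : Multiset.card D.roots = m := by rw [← hMeq, hMcard]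
    omega
  have hDdeg : D.natDegree = m := by
    have : Multiset.card D.roots = m := by rw [← hMeq, hMcard]
    omega
  have hlc : D.leadingCoeff = (m : ℂ) + 1 := by
    rw [leadingCoeff, hDdeg, hcoeffD]
  have key := C_leadingCoeff_mul_prod_multiset_X_sub_C hrootscard
  have heval1 : eval 0 D = ∏ i, (-(z i)) := by
    rw [hD, derivative_mul, derivative_X]
    simp only [one_mul, eval_add, eval_mul, eval_X, zero_mul, add_zero]
    rw [hP, eval_prod]
    simp [eval_sub]
  have heval2 : eval 0 D = ((m : ℂ) + 1) * ∏ i, (-(ζ i)) := by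
    conv_lhs => rw [← key]
    rw [eval_mul, eval_C, hlc, ← hMeq]
    congr 1
    rw [eval_multiset_prod, hM, Multiset.map_map, Multiset.map_map]
    have : ∏ i, (-(ζ i)) = (Finset.univ.val.map fun i => -(ζ i)).prod := rfl
    rw [this]
    congr 1
    apply Multiset.map_congr rfl
    intro x _
    simp
  have hstep : ∏ i, (-(z i)) = ((m : ℂ) + 1) * ∏ i, (-(ζ i)) := by
    rw [← heval1, heval2]
  have hneg : ∀ f : Fin m → ℂ, ∏ i, (-(f i)) = (-1) ^ m * ∏ i, f i := by
    intro f
    have hcard : (Finset.univ : Finset (Fin m)).card = m := by simp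
    calc ∏ i, (-(f i)) = ∏ i, ((-1) * f i) := by
          apply Finset.prod_congr rfl; intro x _; ring
      _ = (∏ _i : Fin m, (-1 : ℂ)) * ∏ i, f i := Finset.prod_mul_distrib
      _ = (-1) ^ m * ∏ i, f i := by rw [Finset.prod_const, hcard]
  rw [hneg z, hneg ζ] at hstep
  have hne : ((-1 : ℂ)) ^ m ≠ 0 := by
    apply pow_ne_zero
    norm_num
  have hcancel : ((-1 : ℂ)) ^ m * (∏ i, z i) = ((-1 : ℂ)) ^ m * (((m : ℂ) + 1) * ∏ i, ζ i) := by
    linear_combination hstep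
  have := mul_left_cancel₀ hne hcancel
  linear_combination -this

end SectorAux

theorem exists_sector_without_critical_point (n : ℕ) (hn : 4 ≤ n)
    (z : Fin (n - 1) → ℂ) (hz1 : z ⟨0, by omega⟩ = 1) (hz0 : ∀ i, z i ≠ 0)
    (hinj : Function.Injective z)
    (hray : ∀ i j, arg2pi (z i) = arg2pi (z j) → i = j)
    (hint : (0 : ℂ) ∈ interior (convexHull ℝ (Set.range z)))
    (p : ℂ[X]) (hp : p = X * ∏ i, (X - C (z i))) :
    ∃ i j : Fin (n - 1), i ≠ j ∧
      (∀ k, z k ∉ openSector0 (z i) (z j)) ∧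
      (∀ w, eval w (derivative p) = 0 → w ∉ openSector0 (z i) (z j)) := by
  classical
  subst hp
  by_contra hcon
  push_neg at hcon
  have hπ := Real.pi_pos
  have hcard : Fintype.card (Fin (n-1)) = n - 1 := by simp
  have hι : (⟨0, by omega⟩ : Fin (n-1)) = ⟨0, by omega⟩ := rfl
  -- angles
  set θ : Fin (n-1) → ℝ := fun i => arg2pi (z i) with hθdef
  have hθ0 : ∀ i, 0 ≤ θ i := fun i => SectorAux.arg2pi_nonneg _
  have hθlt : ∀ i, θ i < 2 * π := fun i => SectorAux.arg2pi_lt _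
  have hθinj : Function.Injective θ := fun i j h => hray i j h
  have hθangle : ∀ i, ((θ i : ℝ) : Real.Angle) = (Complex.arg (z i) : Real.Angle) :=
    fun i => SectorAux.arg2pi_coe (z i)
  set Dl : Fin (n-1) → Fin (n-1) → ℝ := fun i j => arg2pi (z j / z i) with hDldef
  have hDnonneg : ∀ i j, 0 ≤ Dl i j := fun i j => SectorAux.arg2pi_nonneg _
  have hDlt : ∀ i j, Dl i j < 2 * π := fun i j => SectorAux.arg2pi_lt _
  have hDangle : ∀ i j, ((Dl i j : ℝ) : Real.Angle) =
      ((Complex.arg (z j) : ℝ) : Real.Angle) - ((Complex.arg (z i) : ℝ) : Real.Angle) := by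
    intro i j
    simp only [hDldef]
    rw [SectorAux.arg2pi_coe]
    exact Complex.arg_div_coe_angle (hz0 j) (hz0 i)
  have hDpos : ∀ i j, i ≠ j → 0 < Dl i j := by
    intro i j hne
    rcases lt_or_eq_of_le (hDnonneg i j) with h | h
    · exact h
    · exfalso
      have h0 : Complex.arg (z j / z i) = 0 := SectorAux.arg2pi_eq_zero h.symm
      have h2 := Complex.arg_div_coe_angle (hz0 j) (hz0 i)
      rw [h0] at h2
      rw [Real.Angle.coe_zero] at h2
      have h3 : ((Complex.arg (z j) : ℝ) : Real.Angle) = ((Complex.arg (z i) : ℝ) : Real.Angle) :=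
        sub_eq_zero.1 h2.symm
      have h4 : Complex.arg (z j) = Complex.arg (z i) := Complex.arg_coe_angle_eq_iff.1 h3
      have h5 : arg2pi (z j) = arg2pi (z i) := by unfold arg2pi; rw [h4]
      exact hne (hray j i h5).symm
  have hDsum : ∀ i j, i ≠ j → Dl i j + Dl j i = 2 * π := by
    intro i j hne
    have h1 : ((Dl i j + Dl j i : ℝ) : Real.Angle) = ((0:ℝ) : Real.Angle) := by
      rw [Real.Angle.coe_add, hDangle i j, hDangle j i, Real.Angle.coe_zero]
      abel
    obtain ⟨k, hk⟩ := SectorAux.angle_sub_int h1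
    exact SectorAux.int_pin hk (by linarith [hDpos i j hne, hDpos j i hne.symm])
      (by linarith [hDlt i j, hDlt j i])
  -- choice of next
  have hnext : ∀ i : Fin (n-1), ∃ j, j ≠ i ∧ ∀ k, k ≠ i → Dl i j ≤ Dl i k := by
    intro i
    obtain ⟨j0, hj0⟩ := Fintype.exists_ne_of_one_lt_card (by omega) i
    obtain ⟨b, hb, hmin⟩ := Finset.exists_min_image (Finset.univ.erase i) (Dl i)
      ⟨j0, Finset.mem_erase.2 ⟨hj0, Finset.mem_univ _⟩⟩
    exact ⟨b, (Finset.mem_erase.1 hb).1,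
      fun k hk => hmin k (Finset.mem_erase.2 ⟨hk, Finset.mem_univ _⟩)⟩
  choose nxt hnxt_ne hnxt_min using hnext
  have hgpos : ∀ i, 0 < Dl i (nxt i) := fun i => hDpos i (nxt i) (hnxt_ne i).symm
  -- cross positivity for adjacent pair
  have hcross : ∀ i, 0 < SectorAux.cross (z i) (z (nxt i)) := by
    intro i
    by_contra hneg
    push_neg at hneg
    have hall : ∀ w ∈ Set.range z, SectorAux.cross (z i) w ≤ 0 := by
      rintro w ⟨k, rfl⟩
      by_contra hk
      push_neg at hk
      have hk' := (SectorAux.cross_pos_iff (hz0 i) (z k)).1 hk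
      have hki : k ≠ i := by
        rintro rfl
        rw [SectorAux.cross_self] at hk
        exact lt_irrefl 0 hk
      have hlt : Dl i (nxt i) < π := lt_of_le_of_lt (hnxt_min i k hki) hk'.2
      have h2 := (SectorAux.cross_pos_iff (hz0 i) (z (nxt i))).2 ⟨hgpos i, hlt⟩
      exact absurd h2 (not_lt.2 hneg)
    exact SectorAux.notin_interior_halfplane (z i) (hz0 i) hall hint
  -- no root in the sector of an adjacent pair
  have hadd_lt : ∀ i (w : ℂ), w ≠ 0 → 0 < SectorAux.cross (z i) w →
      0 < SectorAux.cross w (z (nxt i)) → arg2pi (w / z i) < Dl i (nxt i) := by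
    intro i w hw0 h1 h2
    have ha := (SectorAux.cross_pos_iff (hz0 i) w).1 h1
    have hb := (SectorAux.cross_pos_iff hw0 (z (nxt i))).1 h2
    have hangle : ((arg2pi (w / z i) + arg2pi (z (nxt i) / w) : ℝ) : Real.Angle)
        = ((Dl i (nxt i) : ℝ) : Real.Angle) := by
      rw [Real.Angle.coe_add, hDangle i (nxt i)]
      rw [SectorAux.arg2pi_coe, SectorAux.arg2pi_coe]
      rw [Complex.arg_div_coe_angle hw0 (hz0 i), Complex.arg_div_coe_angle (hz0 (nxt i)) hw0]
      abel
    obtain ⟨kk, hkk⟩ := SectorAux.angle_sub_int hangle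
    have hzero := SectorAux.int_pin_zero hkk
      (by linarith [ha.1, hb.1, hDlt i (nxt i)])
      (by linarith [ha.2, hb.2, hgpos i])
    linarith [hb.1]
  have hsector_roots : ∀ i, ∀ k, z k ∉ openSector0 (z i) (z (nxt i)) := by
    intro i k hk
    rw [SectorAux.mem_sector_iff (hcross i)] at hk
    obtain ⟨h1, h2⟩ := hk
    have hki : k ≠ i := by
      rintro rfl
      rw [SectorAux.cross_self] at h1
      exact lt_irrefl 0 h1
    have := hadd_lt i (z k) (hz0 k) h1 h2
    have hmin := hnxt_min i k hki
    simp only [hDldef] at hmin this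
    linarith
  -- extract critical points
  have hζex : ∀ i, ∃ w, eval w (derivative (X * ∏ k, (X - C (z k)))) = 0 ∧
      w ∈ openSector0 (z i) (z (nxt i)) :=
    fun i => hcon i (nxt i) (hnxt_ne i).symm (hsector_roots i)
  choose ζ hζroot hζmem using hζex
  have hζfacts : ∀ i, 0 < SectorAux.cross (z i) (ζ i) ∧ 0 < SectorAux.cross (ζ i) (z (nxt i)) :=
    fun i => (SectorAux.mem_sector_iff (hcross i) _).1 (hζmem i)
  have hζ0 : ∀ i, ζ i ≠ 0 := fun i => SectorAux.ne_zero_of_cross_pos_right (hζfacts i).1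
  set ε : Fin (n-1) → ℝ := fun i => arg2pi (ζ i / z i) with hεdef
  have hεbounds : ∀ i, 0 < ε i ∧ ε i < π :=
    fun i => (SectorAux.cross_pos_iff (hz0 i) (ζ i)).1 (hζfacts i).1
  have hεangle : ∀ i, ((ε i : ℝ) : Real.Angle) =
      ((Complex.arg (ζ i) : ℝ) : Real.Angle) - ((Complex.arg (z i) : ℝ) : Real.Angle) := by
    intro i
    simp only [hεdef]
    rw [SectorAux.arg2pi_coe]
    exact Complex.arg_div_coe_angle (hζ0 i) (hz0 i)
  have hεlt : ∀ i, ε i < Dl i (nxt i) := by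
    intro i
    have := hadd_lt i (ζ i) (hζ0 i) (hζfacts i).1 (hζfacts i).2
    simpa only [hεdef] using this
  -- injectivity of ζ
  have hζinj : Function.Injective ζ := by
    intro i₁ i₂ heq
    by_contra hne
    have ha := hεbounds i₁
    have hb := hεbounds i₂
    have hangle : ((ε i₁ : ℝ) : Real.Angle) = ((Dl i₁ i₂ + ε i₂ : ℝ) : Real.Angle) := by
      rw [Real.Angle.coe_add, hεangle i₁, hεangle i₂, hDangle i₁ i₂, heq]
      abel
    obtain ⟨k, hk⟩ := SectorAux.angle_sub_int hangle
    have hc1 := hDpos i₁ i₂ hne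
    have hc2 := hDlt i₁ i₂
    have hmin1 : Dl i₁ (nxt i₁) ≤ Dl i₁ i₂ := hnxt_min i₁ i₂ (Ne.symm hne)
    have hmin2 : Dl i₂ (nxt i₂) ≤ Dl i₂ i₁ := hnxt_min i₂ i₁ hne
    have hsum12 := hDsum i₁ i₂ hne
    rcases SectorAux.int_pin_cases hk (by linarith) (by linarith) with h0 | h1
    · linarith [hεlt i₁]
    · linarith [hεlt i₂]
  -- injectivity of nxt
  have hnxtinj : Function.Injective nxt := by
    intro i₁ i₂ heq
    by_contra hne
    have hangle : ((Dl i₁ (nxt i₁) : ℝ) : Real.Angle)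
        = ((Dl i₁ i₂ + Dl i₂ (nxt i₂) : ℝ) : Real.Angle) := by
      rw [Real.Angle.coe_add, hDangle, hDangle, hDangle, heq]
      abel
    obtain ⟨k, hk⟩ := SectorAux.angle_sub_int hangle
    have hc1 := hDpos i₁ i₂ hne
    have hc2 := hDlt i₁ i₂
    have hmin1 : Dl i₁ (nxt i₁) ≤ Dl i₁ i₂ := hnxt_min i₁ i₂ (Ne.symm hne)
    have hmin2 : Dl i₂ (nxt i₂) ≤ Dl i₂ i₁ := hnxt_min i₂ i₁ hne
    have hsum12 := hDsum i₁ i₂ hne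
    have ha := hgpos i₁
    have hb := hgpos i₂
    have ha' := hDlt i₁ (nxt i₁)
    have hb' := hDlt i₂ (nxt i₂)
    rcases SectorAux.int_pin_cases hk (by linarith) (by linarith) with h0 | h1
    · linarith
    · linarith
  -- the D/θ dichotomy
  have hDθcase : ∀ i j, i ≠ j →
      Dl i j = (θ j - θ i) + (if θ j < θ i then 2*π else 0) := by
    intro i j hne
    have hangle : ((Dl i j : ℝ) : Real.Angle) = ((θ j - θ i : ℝ) : Real.Angle) := by
      rw [hDangle, Real.Angle.coe_sub, hθangle, hθangle]
    obtain ⟨k, hk⟩ := SectorAux.angle_sub_int hangle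
    have hθne : θ j ≠ θ i := fun h => hne (hθinj h).symm
    by_cases hcase : θ j < θ i
    · rw [if_pos hcase]
      have hpin : Dl i j - (θ j - θ i) = 2 * π := by
        have hx : Dl i j - (θ j - θ i) - 0 = 2 * π * k := by rw [sub_zero]; exact hk
        exact SectorAux.int_pin hx
          (by linarith [hDpos i j hne])
          (by linarith [hDlt i j, hθ0 j, hθlt i])
      linarith
    · rw [if_neg hcase]
      push_neg at hcase
      have hlt : θ i < θ j := lt_of_le_of_ne hcase (fun h => hθne h.symm)
      have hzero := SectorAux.int_pin_zero hk
        (by linarith [hDpos i j hne, hθ0 i, hθlt j])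
        (by linarith [hDlt i j])
      linarith
  -- maximal angle index
  have huniv_ne : (Finset.univ : Finset (Fin (n-1))).Nonempty :=
    ⟨⟨0, by omega⟩, Finset.mem_univ _⟩
  obtain ⟨i₀, _, hmax⟩ := Finset.exists_max_image Finset.univ θ huniv_ne
  have hmax' : ∀ i, i ≠ i₀ → θ i < θ i₀ := fun i hne =>
    lt_of_le_of_ne (hmax i (Finset.mem_univ i)) (fun h => hne (hθinj h))
  have hwrap : θ (nxt i₀) < θ i₀ := hmax' (nxt i₀) (hnxt_ne i₀)
  have hnowrap : ∀ i, i ≠ i₀ → ¬ (θ (nxt i) < θ i) := by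
    intro i hne hlt
    have h1 : Dl i (nxt i) = (θ (nxt i) - θ i) + 2*π := by
      rw [hDθcase i (nxt i) (Ne.symm (hnxt_ne i)), if_pos hlt]
    have h2 : Dl i i₀ = θ i₀ - θ i := by
      rw [hDθcase i i₀ hne, if_neg (not_lt.2 (le_of_lt (hmax' i hne)))]
      ring
    have hmin := hnxt_min i i₀ (Ne.symm hne)
    rw [h1, h2] at hmin
    linarith [hθlt i₀, hθ0 (nxt i)]
  -- sum of gaps is 2π
  have hgsum : ∑ i, Dl i (nxt i) = 2 * π := by
    have h1 : ∀ i, Dl i (nxt i) = (θ (nxt i) - θ i) + (if i = i₀ then 2*π else 0) := by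
      intro i
      rw [hDθcase i (nxt i) (Ne.symm (hnxt_ne i))]
      by_cases hcase : i = i₀
      · subst hcase
        rw [if_pos hwrap, if_pos rfl]
      · rw [if_neg (hnowrap i hcase), if_neg hcase]
    rw [Finset.sum_congr rfl (fun i _ => h1 i)]
    rw [Finset.sum_add_distrib]
    have h2 : ∑ i, (θ (nxt i) - θ i) = 0 := by
      rw [Finset.sum_sub_distrib]
      have hbij : Function.Bijective nxt := Finite.injective_iff_bijective.1 hnxtinj
      rw [Fintype.sum_bijective nxt hbij (fun i => θ (nxt i)) θ (fun i => rfl)]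
      ring
    have h3 : ∑ i, (if i = i₀ then 2*π else 0) = 2*π := by
      rw [Finset.sum_ite_eq' Finset.univ i₀ (fun _ => 2*π)]
      simp
    rw [h2, h3]
    ring
  -- the product identity
  have hkey := SectorAux.prod_crit z ζ hζinj hζroot
  have hprodz : ∏ i, z i ≠ 0 := Finset.prod_ne_zero_iff.2 fun i _ => hz0 i
  have hprodζ : ∏ i, ζ i ≠ 0 := Finset.prod_ne_zero_iff.2 fun i _ => hζ0 i
  have hm1ne : (((n-1 : ℕ) : ℂ) + 1) ≠ 0 := by
    have : (((n-1 : ℕ) : ℂ) + 1) = ((n-1+1 : ℕ) : ℂ) := by push_cast; ring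
    rw [this]
    exact Nat.cast_ne_zero.2 (by omega)
  have hratio : ∏ i, (ζ i / z i) = ((((n-1:ℕ) : ℂ)) + 1)⁻¹ := by
    rw [Finset.prod_div_distrib, ← hkey]
    field_simp
  have hargprod : Complex.arg (∏ i, (ζ i / z i)) = 0 := by
    rw [hratio]
    have hcast : (((((n-1:ℕ) : ℂ)) + 1))⁻¹ = ((((((n-1:ℕ) : ℝ)) + 1)⁻¹ : ℝ) : ℂ) := by
      push_cast
      ring
    rw [hcast]
    exact Complex.arg_ofReal_of_nonneg (by positivity)
  have hsumangle : ((∑ i, ε i : ℝ) : Real.Angle) = ((0:ℝ) : Real.Angle) := by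
    have h1 : ((∑ i, ε i : ℝ) : Real.Angle) = ∑ i, ((ε i : ℝ) : Real.Angle) :=
      map_sum Real.Angle.coeHom ε Finset.univ
    have h2 : ∀ i, ((ε i : ℝ) : Real.Angle) = ((Complex.arg (ζ i / z i) : ℝ) : Real.Angle) := by
      intro i
      simp only [hεdef]
      exact SectorAux.arg2pi_coe _
    rw [h1, Finset.sum_congr rfl fun i _ => h2 i]
    rw [← SectorAux.arg_prod_coe_angle Finset.univ _ (fun i _ => div_ne_zero (hζ0 i) (hz0 i))]
    rw [hargprod]
  obtain ⟨k, hk⟩ := SectorAux.angle_sub_int hsumangle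
  rw [sub_zero] at hk
  have hpos : 0 < ∑ i, ε i := Finset.sum_pos (fun i _ => (hεbounds i).1) huniv_ne
  have hlt2 : ∑ i, ε i < 2 * π := by
    have hstrict := Finset.sum_lt_sum_of_nonempty huniv_ne (fun i _ => hεlt i)
    rw [hgsum] at hstrict
    exact hstrict
  have hk0 : (0:ℝ) < (k:ℝ) := by nlinarith
  have hk1 : (k:ℝ) < 1 := by nlinarith
  have h3 : (0:ℤ) < k := by exact_mod_cast hk0
  have h4 : k < 1 := by exact_mod_cast hk1
  omega
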